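/- Let H be a k-uniform hypergraph (k odd) admitting a (2, (k+1)/2)-bucket decomposition with buckets ({Y_i, Z_i}, X_i). Fix j = |Y_i ∩ Z_i| for buckets where this value equals some j ≥ (k+1)/2, and form the multi-hypergraph G on the same vertex set with edges Y_i ⊕ Z_i (symmetric difference) for these buckets. Then any even cover in G of size s yields an even cover in H of size 2s. -/

import Mathlib

lemma card_filter_bind {α β : Type*} (s : Multiset α) (f : α → Multiset β)
    (p : β → Prop) [DecidablePred p] :
    Multiset.card ((s.bind f).filter p) =
      (s.map (fun i => Multiset.card ((f i).filter p))).sum := by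
  induction s using Multiset.induction with
  | empty => simp
  | cons a s ih => simp [Multiset.cons_bind, Multiset.filter_add, ih]

/-- For a `k`-uniform hypergraph (`k` odd) with a `(2,(k+1)/2)`-bucket decomposition into
pairs `{Y i, Z i}` sharing a common `(k+1)/2`-set `X i`, restricted to buckets with
`|Y i ∩ Z i| = j` for some fixed `j ≥ (k+1)/2`: any even cover of size `s` in the
multi-hypergraph of symmetric differences `Y i ⊕ Z i` yields an even cover of size `2s`
in `H`, namely the multiset `{Y i, Z i : i ∈ S}`. -/
theorem stmt8 (n k : ℕ) (hk : Odd k) (ι : Type) (I : Finset ι)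
    (H : Finset (Finset (Fin n)))
    (Y Z X : ι → Finset (Fin n))
    (hY : ∀ i ∈ I, Y i ∈ H) (hZ : ∀ i ∈ I, Z i ∈ H)
    (hYk : ∀ i ∈ I, (Y i).card = k) (hZk : ∀ i ∈ I, (Z i).card = k)
    (hne : ∀ i ∈ I, Y i ≠ Z i)
    (hX : ∀ i ∈ I, (X i).card = (k + 1) / 2 ∧ X i ⊆ Y i ∩ Z i)
    (j : ℕ) (hj : (k + 1) / 2 ≤ j)
    (hcap : ∀ i ∈ I, ((Y i) ∩ (Z i)).card = j)
    (S : Finset ι) (hSI : S ⊆ I) (hSne : S.Nonempty)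
    (hcover : ∀ v : Fin n,
      Even ((S.filter (fun i => v ∈ symmDiff (Y i) (Z i))).card)) :
    Multiset.card (S.val.bind (fun i => {Y i, Z i})) = 2 * S.card ∧
    ∀ v : Fin n,
      Even (Multiset.card ((S.val.bind (fun i => {Y i, Z i})).filter (fun E => v ∈ E))) := by
  constructor
  · rw [Multiset.card_bind]
    have : (S.val.map (Multiset.card ∘ fun i => ({Y i, Z i} : Multiset _))) =
        S.val.map (fun _ => 2) := Multiset.map_congr rfl (fun i _ => rfl)
    rw [this, Multiset.map_const', Multiset.sum_replicate, smul_eq_mul, mul_comm]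
    rfl
  · intro v
    rw [card_filter_bind]
    have hsum : (S.val.map (fun i =>
        Multiset.card (({Y i, Z i} : Multiset _).filter (fun E => v ∈ E)))).sum =
        ∑ i ∈ S, ((if v ∈ Y i then 1 else 0) + (if v ∈ Z i then 1 else 0)) := by
      rw [Finset.sum]
      apply congrArg
      apply Multiset.map_congr rfl
      intro i _
      show Multiset.card (Multiset.filter _ (Y i ::ₘ {Z i})) = _
      by_cases h1 : v ∈ Y i <;> by_cases h2 : v ∈ Z i <;>
        simp [Multiset.filter_cons, Multiset.filter_singleton, h1, h2]
    rw [hsum, Nat.even_iff, Finset.sum_nat_mod]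
    have : ∀ i ∈ S, ((if v ∈ Y i then 1 else 0) + (if v ∈ Z i then 1 else 0)) % 2 =
        if v ∈ symmDiff (Y i) (Z i) then 1 else 0 := by
      intro i _
      by_cases h1 : v ∈ Y i <;> by_cases h2 : v ∈ Z i <;>
        simp [Finset.mem_symmDiff, h1, h2]
    rw [Finset.sum_congr rfl this, ← Finset.card_filter]
    simpa [Nat.even_iff] using hcover v
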